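/- Let A be a positive self-adjoint operator on a Hilbert space H with spectrum bounded below by μ₁ > 0, and let B* : H → U be a bounded operator with β := (1/2)‖B*‖². If λ ∈ ℂ and u ∈ D(A), u ≠ 0, satisfy λ²u + λ B B* u + A u = 0, and λ is not real, then -β ≤ Re(λ) ≤ 0 and |λ|² ≥ μ₁. -/

import Mathlib

open scoped ComplexInnerProductSpace

/-- Non-real eigenvalues of the quadratic pencil `λ²u + λBB*u + Au = 0` associated to the
damped equation `ẍ + Ax + BB*ẋ = 0` lie in the strip `-β ≤ Re λ ≤ 0`, `|λ|² ≥ μ₁`,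
where `β = ½‖B*‖²` and `μ₁ > 0` is a lower bound of the positive operator `A`. -/
theorem nonreal_eigenvalues_location
    {H U : Type*} [NormedAddCommGroup H] [InnerProductSpace ℂ H] [CompleteSpace H]
    [NormedAddCommGroup U] [InnerProductSpace ℂ U] [CompleteSpace U]
    (D : Submodule ℂ H) (A : D →ₗ[ℂ] H)
    (hsym : ∀ u v : D, ⟪A u, (v : H)⟫ = ⟪(u : H), A v⟫)
    (μ₁ : ℝ) (hμ₁ : 0 < μ₁)
    (hpos : ∀ u : D, μ₁ * ‖(u : H)‖ ^ 2 ≤ (⟪A u, (u : H)⟫ : ℂ).re)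
    (B : U →L[ℂ] H) (β : ℝ) (hβ : β = (1 / 2) * ‖B.adjoint‖ ^ 2)
    (lam : ℂ) (u : D) (hu : (u : H) ≠ 0)
    (heq : lam ^ 2 • (u : H) + lam • B (B.adjoint (u : H)) + A u = 0)
    (hnr : lam.im ≠ 0) :
    -β ≤ lam.re ∧ lam.re ≤ 0 ∧ μ₁ ≤ ‖lam‖ ^ 2 := by
  set a : ℝ := ‖(u : H)‖ ^ 2 with ha
  set b : ℝ := ‖B.adjoint (u : H)‖ ^ 2 with hb
  set c : ℝ := (⟪A u, (u : H)⟫ : ℂ).re with hc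
  have hip : ⟪(u : H), lam ^ 2 • (u : H) + lam • B (B.adjoint (u : H)) + A u⟫ = 0 := by
    rw [heq, inner_zero_right]
  rw [inner_add_right, inner_add_right, inner_smul_right, inner_smul_right] at hip
  have h1 : ⟪(u : H), (u : H)⟫ = (a : ℂ) := by
    rw [inner_self_eq_norm_sq_to_K]; norm_cast
  have h2 : ⟪(u : H), B (B.adjoint (u : H))⟫ = (b : ℂ) := by
    rw [← ContinuousLinearMap.adjoint_inner_left, inner_self_eq_norm_sq_to_K]; norm_cast
  have hcr : ⟪(u : H), A u⟫ = (c : ℂ) := by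
    have h3 : (starRingEnd ℂ) ⟪A u, (u : H)⟫ = ⟪A u, (u : H)⟫ := by
      rw [inner_conj_symm, hsym]
    rw [← hsym, ← (Complex.conj_eq_iff_re.mp h3)]
  rw [h1, h2, hcr] at hip
  have ha0 : 0 < a := by
    have := norm_pos_iff.mpr hu
    positivity
  have hb0 : 0 ≤ b := by positivity
  have hcμ : μ₁ * a ≤ c := hpos u
  have hbB : b ≤ ‖B.adjoint‖ ^ 2 * a := by
    have h := B.adjoint.le_opNorm (u : H)
    have hn : 0 ≤ ‖B.adjoint (u : H)‖ := norm_nonneg _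
    nlinarith [norm_nonneg (u : H), B.adjoint.opNorm_nonneg]
  set r : ℝ := lam.re
  set s : ℝ := lam.im
  have him : (r * s + s * r) * a + s * b = 0 := by
    have := congrArg Complex.im hip
    simpa [pow_two, Complex.mul_im, Complex.add_im, Complex.mul_re, r, s] using this
  have hre : (r * r - s * s) * a + r * b + c = 0 := by
    have := congrArg Complex.re hip
    simpa [pow_two, Complex.mul_re, Complex.add_re, Complex.mul_im, r, s] using this
  have hkey : 2 * r * a + b = 0 := by
    have : s * (2 * r * a + b) = 0 := by linear_combination him
    rcases mul_eq_zero.mp this with h | h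
    · exact absurd h hnr
    · exact h
  refine ⟨?_, ?_, ?_⟩
  · nlinarith
  · nlinarith
  · have habs : ‖lam‖ ^ 2 = r * r + s * s := by
      rw [Complex.sq_norm, Complex.normSq_apply]
    rw [habs]
    have h4 : (2 * r * a + b) * r = 0 := by rw [hkey]; ring
    nlinarith [h4, hre, hcμ, ha0]
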